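/- arXiv:1201.2977 — 2 statements merged into one kernel-verified Lean document; each statement's English description precedes it below -/
import Mathlib

section
/- Let c = (c_1,…,c_k) be a composition with k ≥ 2 parts. Let c^1 = (c_1+c_2, c_3,…,c_k) be the composition obtained by merging the first two parts, and let c^L = (c_2,…,c_k). Then for every real q, g_c(q) = (1/c_1)·g_{c^1}(q) − (q^{c_1}/c_1)·g_{c^L}(q). -/
open MeasureTheory intervalIntegral in
lemma my_integral_pow (n : ℕ) (a b : ℝ) :
    ∫ x in a..b, x ^ n = (b ^ (n + 1) - a ^ (n + 1)) / (n + 1) :=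
  integral_pow n

open MeasureTheory

/-- Iterated integral defining the composition polynomial, peeling off the
outermost variable first (so the list argument is the reversed composition). -/
noncomputable def gAux : List ℕ → ℝ → ℝ → ℝ
  | [], _, _ => 1
  | a :: rest, q, u => ∫ t in q..u, t ^ (a - 1) * gAux rest q t

/-- The composition polynomial
`g_c(q) = ∫_q^1 ∫_q^{t_k} ⋯ ∫_q^{t_2} t_1^{c_1-1} ⋯ t_k^{c_k-1} dt_1 ⋯ dt_k`. -/
noncomputable def gcomp (c : List ℕ) (q : ℝ) : ℝ := gAux c.reverse q 1

lemma gAux_continuous (L : List ℕ) (q : ℝ) : Continuous (gAux L q) := by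
  induction L with
  | nil => simpa [gAux] using continuous_const
  | cons a rest ih =>
    have hc : Continuous fun t : ℝ => t ^ (a - 1) * gAux rest q t :=
      (continuous_pow _).mul ih
    have := intervalIntegral.continuous_primitive (μ := volume)
      (fun a b => hc.intervalIntegrable a b) q
    simpa [gAux] using this

lemma hcast {n : ℕ} (hn : 0 < n) : ((n - 1 : ℕ) : ℝ) + 1 = n := by
  exact_mod_cast Nat.sub_add_cancel hn

lemma gAux_rec (c1 c2 : ℕ) (h1 : 0 < c1) (h2 : 0 < c2) (q : ℝ) (L : List ℕ) :
    ∀ u : ℝ, gAux (L ++ [c2, c1]) q u =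
      (1 / (c1 : ℝ)) * gAux (L ++ [c1 + c2]) q u
        - (q ^ c1 / (c1 : ℝ)) * gAux (L ++ [c2]) q u := by
  have hc1 : (c1 : ℝ) ≠ 0 := by positivity
  induction L with
  | nil =>
    intro u
    have hinner : ∀ t : ℝ, gAux [c1] q t = (t ^ c1 - q ^ c1) / c1 := by
      intro t
      simp only [gAux, mul_one]
      rw [my_integral_pow, Nat.sub_add_cancel h1, hcast h1]
    simp only [List.nil_append]
    have key : gAux [c2, c1] q u
        = ∫ t in q..u, ((1 : ℝ) / c1) * t ^ (c1 + c2 - 1)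
            - (q ^ c1 / c1) * t ^ (c2 - 1) := by
      show (∫ t in q..u, t ^ (c2 - 1) * gAux [c1] q t) = _
      apply intervalIntegral.integral_congr
      intro t _
      dsimp only
      rw [hinner]
      have he : t ^ (c2 - 1) * t ^ c1 = t ^ (c1 + c2 - 1) := by
        rw [← pow_add]; congr 1; omega
      field_simp
      rw [mul_sub, he]
    rw [key, intervalIntegral.integral_sub
        (show IntervalIntegrable (fun t : ℝ => (1 : ℝ) / c1 * t ^ (c1 + c2 - 1)) volume q u from (continuous_const.mul (continuous_pow _)).intervalIntegrable _ _)
        (show IntervalIntegrable (fun t : ℝ => q ^ c1 / c1 * t ^ (c2 - 1)) volume q u from (continuous_const.mul (continuous_pow _)).intervalIntegrable _ _),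
      intervalIntegral.integral_const_mul, intervalIntegral.integral_const_mul]
    simp only [gAux, mul_one]
  | cons a L ih =>
    intro u
    simp only [List.cons_append, gAux, List.append_eq]
    have key : (∫ t in q..u, t ^ (a - 1) * gAux (L ++ [c2, c1]) q t)
        = ∫ t in q..u, (1 / (c1 : ℝ)) * (t ^ (a - 1) * gAux (L ++ [c1 + c2]) q t)
            - (q ^ c1 / (c1 : ℝ)) * (t ^ (a - 1) * gAux (L ++ [c2]) q t) := by
      apply intervalIntegral.integral_congr
      intro t _
      dsimp only
      rw [ih t]
      ring
    rw [key, intervalIntegral.integral_sub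
        (show IntervalIntegrable (fun t : ℝ => (1 / (c1 : ℝ)) * (t ^ (a - 1) * gAux (L ++ [c1 + c2]) q t)) volume q u from (continuous_const.mul ((continuous_pow _).mul (gAux_continuous _ q))).intervalIntegrable _ _)
        (show IntervalIntegrable (fun t : ℝ => (q ^ c1 / (c1 : ℝ)) * (t ^ (a - 1) * gAux (L ++ [c2]) q t)) volume q u from (continuous_const.mul ((continuous_pow _).mul (gAux_continuous _ q))).intervalIntegrable _ _),
      intervalIntegral.integral_const_mul, intervalIntegral.integral_const_mul]

/-- Theorem: for a composition `c = (c_1, c_2, …, c_k)` with `k ≥ 2`,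
`g_c(q) = (1/c_1)·g_{c^1}(q) − (q^{c_1}/c_1)·g_{c^L}(q)`, where
`c^1 = (c_1+c_2, c_3, …, c_k)` and `c^L = (c_2, …, c_k)`. -/
theorem composition_polynomial_recursion (c1 c2 : ℕ) (rest : List ℕ)
    (h1 : 0 < c1) (h2 : 0 < c2) (hrest : ∀ a ∈ rest, 0 < a) (q : ℝ) :
    gcomp (c1 :: c2 :: rest) q =
      (1 / (c1 : ℝ)) * gcomp ((c1 + c2) :: rest) q -
        (q ^ c1 / (c1 : ℝ)) * gcomp (c2 :: rest) q := by
  have := gAux_rec c1 c2 h1 h2 q rest.reverse 1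
  simpa [gcomp, List.reverse_cons, List.append_assoc] using this
end

section
/- Let c = (c_1,…,c_k) be a composition of size n with k ≥ 2, with partial sums β_i = c_1+⋯+c_i for 0 ≤ i ≤ k. Then for every real q (nonzero where 1/q appears implicitly, i.e. for all q): (i) for each 1 ≤ m ≤ k−1, g_{c^m}(q) = Σ_{i=0}^k q^{β_i}(β_m − β_i) / ∏_{j≠i}(β_j − β_i); (ii) g_{c^R}(q) = Σ_{i=0}^k q^{β_i}(n − β_i) / ∏_{j≠i}(β_j − β_i); and (iii) q^{c_1}·g_{c^L}(q) = −Σ_{i=0}^k q^{β_i}·β_i / ∏_{j≠i}(β_j − β_i). -/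
open MeasureTheory

/-- Partial sums `β_i = c_1 + ⋯ + c_i`. -/
def beta (c : List ℕ) (i : ℕ) : ℕ := (c.take i).sum

/-- The product `∏_{j ≠ i} (β_j − β_i)` over `0 ≤ j ≤ k`, `j ≠ i`. -/
noncomputable def vprod (c : List ℕ) (i : ℕ) : ℝ :=
  ∏ j ∈ (Finset.range (c.length + 1)).erase i, ((beta c j : ℝ) - (beta c i : ℝ))

section Aux

open Finset Polynomial

theorem lag_id {F : Type*} [Field F] {ι : Type*} [DecidableEq ι] (s : Finset ι) (v : ι → F)
    (hvs : Set.InjOn v s) (hs : 2 ≤ s.card) :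
    ∑ i ∈ s, ∏ j ∈ s.erase i, (v i - v j)⁻¹ = 0 := by
  have h := Lagrange.sum_basis hvs (Finset.card_pos.mp (by omega))
  have h2 := congrArg (fun p => Polynomial.coeff p (s.card - 1)) h
  simp only [Polynomial.finset_sum_coeff] at h2
  rw [Polynomial.coeff_one] at h2
  rw [if_neg (by omega : ¬ (s.card - 1 = 0))] at h2
  rw [← h2]
  refine Finset.sum_congr rfl fun i hi => ?_
  have hd : (Lagrange.basis s v i).natDegree = s.card - 1 := Lagrange.natDegree_basis hvs hi
  rw [← hd, Polynomial.coeff_natDegree]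
  unfold Lagrange.basis
  rw [Polynomial.leadingCoeff_prod]
  refine Finset.prod_congr rfl fun j hj => ?_
  unfold Lagrange.basisDivisor
  rw [Polynomial.leadingCoeff_mul, Polynomial.leadingCoeff_C,
    (Polynomial.monic_X_sub_C (v j)).leadingCoeff, mul_one]

lemma prod_neg' {ι : Type*} (s : Finset ι) (f : ι → ℝ) :
    ∏ i ∈ s, -f i = (-1) ^ s.card * ∏ i ∈ s, f i := by
  rw [show (∏ i ∈ s, -f i) = ∏ i ∈ s, (-1) * f i from
    Finset.prod_congr rfl fun i _ => (neg_one_mul _).symm,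
    Finset.prod_mul_distrib, Finset.prod_const]

theorem lag_id' {ι : Type*} [DecidableEq ι] (s : Finset ι) (v : ι → ℝ)
    (hvs : Set.InjOn v s) (hs : 2 ≤ s.card) :
    ∑ i ∈ s, ∏ j ∈ s.erase i, (v j - v i)⁻¹ = 0 := by
  have key : ∀ i ∈ s, ∏ j ∈ s.erase i, (v j - v i)⁻¹
      = (-1) ^ (s.card - 1) * ∏ j ∈ s.erase i, (v i - v j)⁻¹ := by
    intro i hi
    rw [show (∏ j ∈ s.erase i, (v j - v i)⁻¹) = ∏ j ∈ s.erase i, -(v i - v j)⁻¹ from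
      Finset.prod_congr rfl fun j _ => by rw [← inv_neg, neg_sub], prod_neg',
      Finset.card_erase_of_mem hi]
  rw [Finset.sum_congr rfl key, ← Finset.mul_sum, lag_id s v hvs hs, mul_zero]

lemma beta_zero (c : List ℕ) : beta c 0 = 0 := rfl

lemma beta_nil (i : ℕ) : beta [] i = 0 := by simp [beta]

lemma beta_cons_succ (a : ℕ) (l : List ℕ) (i : ℕ) : beta (a :: l) (i + 1) = a + beta l i := by
  simp [beta, List.take_succ_cons]

lemma beta_length (c : List ℕ) : beta c c.length = c.sum := by simp [beta]

lemma beta_le_sum (c : List ℕ) (i : ℕ) : beta c i ≤ c.sum := by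
  induction c generalizing i with
  | nil => simp [beta_nil]
  | cons a l ih =>
    cases i with
    | zero => simp [beta_zero]
    | succ j => rw [beta_cons_succ]; simp only [List.sum_cons]; exact Nat.add_le_add_left (ih j) a

lemma beta_mono (c : List ℕ) {i j : ℕ} (h : i ≤ j) : beta c i ≤ beta c j := by
  induction c generalizing i j with
  | nil => simp [beta_nil]
  | cons a l ih =>
    cases i with
    | zero => simp [beta_zero]
    | succ i' =>
      cases j with
      | zero => omega
      | succ j' => rw [beta_cons_succ, beta_cons_succ]; exact Nat.add_le_add_left (ih (by omega)) a

lemma beta_lt (c : List ℕ) (hpos : ∀ a ∈ c, 0 < a) {i j : ℕ} (hij : i < j) (hj : j ≤ c.length) :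
    beta c i < beta c j := by
  induction c generalizing i j with
  | nil => simp at hj; omega
  | cons a l ih =>
    cases j with
    | zero => omega
    | succ j' =>
      rw [beta_cons_succ]
      cases i with
      | zero =>
        rw [beta_zero]
        have := hpos a (List.mem_cons_self)
        omega
      | succ i' =>
        rw [beta_cons_succ]
        have := ih (fun x hx => hpos x (List.mem_cons_of_mem a hx)) (by omega : i' < j')
          (by simpa using hj)
        omega

lemma beta_inj (c : List ℕ) (hpos : ∀ a ∈ c, 0 < a) {i j : ℕ} (hi : i ≤ c.length)
    (hj : j ≤ c.length) (h : beta c i = beta c j) : i = j := by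
  rcases lt_trichotomy i j with h1 | h1 | h1
  · exact absurd h (Nat.ne_of_lt (beta_lt c hpos h1 hj))
  · exact h1
  · exact absurd h.symm (Nat.ne_of_lt (beta_lt c hpos h1 hi))

lemma beta_reverse (c : List ℕ) {i : ℕ} (h : i ≤ c.length) :
    beta c.reverse i = c.sum - beta c (c.length - i) := by
  unfold beta
  have hsp : c.reverse = c.reverse.take i ++ c.reverse.drop i := (List.take_append_drop _ _).symm
  have hs : (c.reverse.take i).sum + (c.reverse.drop i).sum = c.sum := by
    conv_rhs => rw [← List.sum_reverse, hsp]
    rw [List.sum_append]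
  rw [List.drop_reverse, List.sum_reverse] at hs
  omega


theorem gAux_eq (l : List ℕ) (hpos : ∀ a ∈ l, 0 < a) (q u : ℝ) :
    gAux l q u = ∑ i ∈ Finset.range (l.length + 1),
      u ^ beta l i * q ^ (l.sum - beta l i) *
        ((-1 : ℝ) ^ l.length *
          ∏ j ∈ (Finset.range (l.length + 1)).erase i, ((beta l j : ℝ) - (beta l i : ℝ))⁻¹) := by
  induction l generalizing q u with
  | nil => simp [gAux, beta_nil]
  | cons a l ih =>
    have hpos' : ∀ x ∈ l, 0 < x := fun x hx => hpos x (List.mem_cons_of_mem a hx)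
    have ha : 0 < a := hpos a (List.mem_cons_self)
    -- step 1 : compute the integral
    have step1 : gAux (a :: l) q u = ∑ i ∈ Finset.range (l.length + 1),
        (u ^ (a + beta l i) - q ^ (a + beta l i)) / ((a : ℝ) + (beta l i : ℝ)) *
          (q ^ (l.sum - beta l i) * ((-1 : ℝ) ^ l.length *
            ∏ j ∈ (Finset.range (l.length + 1)).erase i,
              ((beta l j : ℝ) - (beta l i : ℝ))⁻¹)) := by
      show (∫ t in q..u, t ^ (a - 1) * gAux l q t) = _
      have hInt : ∀ t : ℝ, t ^ (a - 1) * gAux l q t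
          = ∑ i ∈ Finset.range (l.length + 1),
              t ^ (a - 1 + beta l i) * (q ^ (l.sum - beta l i) * ((-1 : ℝ) ^ l.length *
                ∏ j ∈ (Finset.range (l.length + 1)).erase i,
                  ((beta l j : ℝ) - (beta l i : ℝ))⁻¹)) := by
        intro t
        rw [ih hpos', Finset.mul_sum]
        exact Finset.sum_congr rfl fun i _ => by rw [pow_add]; ring
      simp only [hInt]
      rw [intervalIntegral.integral_finset_sum (f := fun i t => t ^ (a - 1 + beta l i) *
          (q ^ (l.sum - beta l i) * ((-1 : ℝ) ^ l.length * ∏ j ∈ (Finset.range (l.length + 1)).erase i,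
            ((beta l j : ℝ) - (beta l i : ℝ))⁻¹)))
        (fun i _ => ((continuous_pow _).mul continuous_const).intervalIntegrable q u)]
      refine Finset.sum_congr rfl fun i _ => ?_
      rw [intervalIntegral.integral_mul_const, integral_pow]
      have hexp : a - 1 + beta l i + 1 = a + beta l i := by omega
      have hexp2 : ((a - 1 + beta l i : ℕ) : ℝ) + 1 = ((a : ℝ) + (beta l i : ℝ)) := by
        push_cast [Nat.cast_sub (by omega : 1 ≤ a)]
        ring
      rw [hexp, hexp2]
    -- the new product values
    have hPsucc : ∀ i ∈ Finset.range (l.length + 1),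
        (∏ j ∈ (Finset.range (l.length + 1 + 1)).erase (i + 1),
            ((beta (a :: l) j : ℝ) - (beta (a :: l) (i + 1) : ℝ))⁻¹)
          = -(((a : ℝ) + (beta l i : ℝ))⁻¹ *
              ∏ j ∈ (Finset.range (l.length + 1)).erase i,
                ((beta l j : ℝ) - (beta l i : ℝ))⁻¹) := by
      intro i hi
      have hset : (Finset.range (l.length + 1 + 1)).erase (i + 1)
          = insert 0 (((Finset.range (l.length + 1)).erase i).image (· + 1)) := by
        ext x
        simp only [Finset.mem_erase, Finset.mem_range, Finset.mem_insert, Finset.mem_image]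
        cases x with
        | zero => simp
        | succ x' =>
          constructor
          · rintro ⟨h1, h2⟩
            right
            exact ⟨x', ⟨by omega, by omega⟩, rfl⟩
          · rintro (h | ⟨b, ⟨hb1, hb2⟩, hb3⟩) <;> omega
      rw [hset, Finset.prod_insert (by simp), Finset.prod_image (fun x _ y _ h => by omega)]
      have hfac : ∀ j ∈ (Finset.range (l.length + 1)).erase i,
          ((beta (a :: l) (j + 1) : ℝ) - (beta (a :: l) (i + 1) : ℝ))⁻¹
          = ((beta l j : ℝ) - (beta l i : ℝ))⁻¹ := by
        intro j _
        rw [beta_cons_succ, beta_cons_succ]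
        push_cast
        ring_nf
      rw [Finset.prod_congr rfl hfac, beta_zero, beta_cons_succ]
      push_cast
      rw [zero_sub, inv_neg, neg_mul]
    -- sum of the new products vanishes
    have hinj : Set.InjOn (fun j => (beta (a :: l) j : ℝ))
        (Finset.range (l.length + 1 + 1)) := by
      intro x hx y hy hxy
      have hx' : x < l.length + 1 + 1 := Finset.mem_range.mp (Finset.mem_coe.mp hx)
      have hy' : y < l.length + 1 + 1 := Finset.mem_range.mp (Finset.mem_coe.mp hy)
      have hcast : beta (a :: l) x = beta (a :: l) y := Nat.cast_injective hxy
      exact beta_inj (a :: l) hpos (by simp; omega) (by simp; omega) hcast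
    have hsum0 : ∑ i ∈ Finset.range (l.length + 1 + 1),
        ∏ j ∈ (Finset.range (l.length + 1 + 1)).erase i,
          ((beta (a :: l) j : ℝ) - (beta (a :: l) i : ℝ))⁻¹ = 0 := by
      simpa using lag_id' (Finset.range (l.length + 1 + 1))
        (fun j => (beta (a :: l) j : ℝ)) hinj (by simp)
    have hP0 : (∏ j ∈ (Finset.range (l.length + 1 + 1)).erase 0,
          ((beta (a :: l) j : ℝ) - (beta (a :: l) 0 : ℝ))⁻¹)
        = -∑ i ∈ Finset.range (l.length + 1),
            ∏ j ∈ (Finset.range (l.length + 1 + 1)).erase (i + 1),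
              ((beta (a :: l) j : ℝ) - (beta (a :: l) (i + 1) : ℝ))⁻¹ := by
      rw [Finset.sum_range_succ'] at hsum0
      linarith
    -- termwise identities
    have hL : ∀ i ∈ Finset.range (l.length + 1),
        (u ^ (a + beta l i) - q ^ (a + beta l i)) / ((a : ℝ) + (beta l i : ℝ)) *
          (q ^ (l.sum - beta l i) * ((-1 : ℝ) ^ l.length *
            ∏ j ∈ (Finset.range (l.length + 1)).erase i,
              ((beta l j : ℝ) - (beta l i : ℝ))⁻¹))
        = u ^ (a + beta l i) * q ^ (l.sum - beta l i) *
            ((-1 : ℝ) ^ (l.length + 1) *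
              ∏ j ∈ (Finset.range (l.length + 1 + 1)).erase (i + 1),
                ((beta (a :: l) j : ℝ) - (beta (a :: l) (i + 1) : ℝ))⁻¹)
          - q ^ (a + l.sum) *
            ((-1 : ℝ) ^ (l.length + 1) *
              ∏ j ∈ (Finset.range (l.length + 1 + 1)).erase (i + 1),
                ((beta (a :: l) j : ℝ) - (beta (a :: l) (i + 1) : ℝ))⁻¹) := by
      intro i hi
      have hq : q ^ (a + beta l i) * q ^ (l.sum - beta l i) = q ^ (a + l.sum) := by
        rw [← pow_add]
        congr 1
        have := beta_le_sum l i
        omega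
      rw [hPsucc i hi, ← hq]
      ring
    have e1 : ∀ i ∈ Finset.range (l.length + 1),
        u ^ (a + beta l i) * q ^ (l.sum - beta l i) *
            ((-1 : ℝ) ^ (l.length + 1) *
              ∏ j ∈ (Finset.range (l.length + 1 + 1)).erase (i + 1),
                ((beta (a :: l) j : ℝ) - (beta (a :: l) (i + 1) : ℝ))⁻¹)
        = u ^ beta (a :: l) (i + 1) * q ^ (a + l.sum - beta (a :: l) (i + 1)) *
            ((-1 : ℝ) ^ (l.length + 1) *
              ∏ j ∈ (Finset.range (l.length + 1 + 1)).erase (i + 1),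
                ((beta (a :: l) j : ℝ) - (beta (a :: l) (i + 1) : ℝ))⁻¹) := by
      intro i _
      rw [beta_cons_succ]
      have hsub : a + l.sum - (a + beta l i) = l.sum - beta l i := by omega
      rw [hsub]
    have e2 : u ^ beta (a :: l) 0 * q ^ (a + l.sum - beta (a :: l) 0) *
          ((-1 : ℝ) ^ (l.length + 1) *
            ∏ j ∈ (Finset.range (l.length + 1 + 1)).erase 0,
              ((beta (a :: l) j : ℝ) - (beta (a :: l) 0 : ℝ))⁻¹)
        = -∑ i ∈ Finset.range (l.length + 1),
            q ^ (a + l.sum) *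
              ((-1 : ℝ) ^ (l.length + 1) *
                ∏ j ∈ (Finset.range (l.length + 1 + 1)).erase (i + 1),
                  ((beta (a :: l) j : ℝ) - (beta (a :: l) (i + 1) : ℝ))⁻¹) := by
      rw [hP0]
      simp only [beta_zero, pow_zero, one_mul, Nat.sub_zero, mul_neg, neg_inj, Finset.mul_sum]
    calc gAux (a :: l) q u
        = ∑ i ∈ Finset.range (l.length + 1),
            (u ^ (a + beta l i) - q ^ (a + beta l i)) / ((a : ℝ) + (beta l i : ℝ)) *
              (q ^ (l.sum - beta l i) * ((-1 : ℝ) ^ l.length *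
                ∏ j ∈ (Finset.range (l.length + 1)).erase i,
                  ((beta l j : ℝ) - (beta l i : ℝ))⁻¹)) := step1
      _ = ∑ i ∈ Finset.range (l.length + 1),
            (u ^ (a + beta l i) * q ^ (l.sum - beta l i) *
              ((-1 : ℝ) ^ (l.length + 1) *
                ∏ j ∈ (Finset.range (l.length + 1 + 1)).erase (i + 1),
                  ((beta (a :: l) j : ℝ) - (beta (a :: l) (i + 1) : ℝ))⁻¹)
            - q ^ (a + l.sum) *
              ((-1 : ℝ) ^ (l.length + 1) *
                ∏ j ∈ (Finset.range (l.length + 1 + 1)).erase (i + 1),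
                  ((beta (a :: l) j : ℝ) - (beta (a :: l) (i + 1) : ℝ))⁻¹)) :=
          Finset.sum_congr rfl hL
      _ = (∑ i ∈ Finset.range (l.length + 1),
            u ^ (a + beta l i) * q ^ (l.sum - beta l i) *
              ((-1 : ℝ) ^ (l.length + 1) *
                ∏ j ∈ (Finset.range (l.length + 1 + 1)).erase (i + 1),
                  ((beta (a :: l) j : ℝ) - (beta (a :: l) (i + 1) : ℝ))⁻¹))
          - ∑ i ∈ Finset.range (l.length + 1),
            q ^ (a + l.sum) *
              ((-1 : ℝ) ^ (l.length + 1) *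
                ∏ j ∈ (Finset.range (l.length + 1 + 1)).erase (i + 1),
                  ((beta (a :: l) j : ℝ) - (beta (a :: l) (i + 1) : ℝ))⁻¹) :=
          Finset.sum_sub_distrib _ _
      _ = (∑ i ∈ Finset.range (l.length + 1),
            u ^ beta (a :: l) (i + 1) * q ^ (a + l.sum - beta (a :: l) (i + 1)) *
              ((-1 : ℝ) ^ (l.length + 1) *
                ∏ j ∈ (Finset.range (l.length + 1 + 1)).erase (i + 1),
                  ((beta (a :: l) j : ℝ) - (beta (a :: l) (i + 1) : ℝ))⁻¹))
          + (u ^ beta (a :: l) 0 * q ^ (a + l.sum - beta (a :: l) 0) *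
              ((-1 : ℝ) ^ (l.length + 1) *
                ∏ j ∈ (Finset.range (l.length + 1 + 1)).erase 0,
                  ((beta (a :: l) j : ℝ) - (beta (a :: l) 0 : ℝ))⁻¹)) := by
          rw [Finset.sum_congr rfl e1, e2]
          ring
      _ = ∑ i ∈ Finset.range (l.length + 1 + 1),
            u ^ beta (a :: l) i * q ^ (a + l.sum - beta (a :: l) i) *
              ((-1 : ℝ) ^ (l.length + 1) *
                ∏ j ∈ (Finset.range (l.length + 1 + 1)).erase i,
                  ((beta (a :: l) j : ℝ) - (beta (a :: l) i : ℝ))⁻¹) :=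
          (Finset.sum_range_succ' (fun i =>
            u ^ beta (a :: l) i * q ^ (a + l.sum - beta (a :: l) i) *
              ((-1 : ℝ) ^ (l.length + 1) *
                ∏ j ∈ (Finset.range (l.length + 1 + 1)).erase i,
                  ((beta (a :: l) j : ℝ) - (beta (a :: l) i : ℝ))⁻¹)) (l.length + 1)).symm
      _ = ∑ i ∈ Finset.range ((a :: l).length + 1),
            u ^ beta (a :: l) i * q ^ ((a :: l).sum - beta (a :: l) i) *
              ((-1 : ℝ) ^ (a :: l).length *
                ∏ j ∈ (Finset.range ((a :: l).length + 1)).erase i,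
                  ((beta (a :: l) j : ℝ) - (beta (a :: l) i : ℝ))⁻¹) := by
          simp only [List.length_cons, List.sum_cons]

theorem gcomp_eq (c : List ℕ) (hpos : ∀ a ∈ c, 0 < a) (q : ℝ) :
    gcomp c q = ∑ i ∈ Finset.range (c.length + 1),
      q ^ beta c i * ∏ j ∈ (Finset.range (c.length + 1)).erase i,
        ((beta c j : ℝ) - (beta c i : ℝ))⁻¹ := by
  have hrev : ∀ a ∈ c.reverse, 0 < a := fun a ha => hpos a (List.mem_reverse.mp ha)
  rw [gcomp, gAux_eq c.reverse hrev q 1]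
  simp only [List.length_reverse, List.sum_reverse, one_pow, one_mul]
  conv_rhs => rw [← Finset.sum_range_reflect]
  refine Finset.sum_congr rfl fun i hi => ?_
  have hi' : i ≤ c.length := by
    have := Finset.mem_range.mp hi; omega
  have hki : c.length + 1 - 1 - i = c.length - i := by omega
  rw [hki]
  have hbr : beta c.reverse i = c.sum - beta c (c.length - i) := beta_reverse c hi'
  have hexp : c.sum - beta c.reverse i = beta c (c.length - i) := by
    rw [hbr]
    have := beta_le_sum c (c.length - i)
    omega
  rw [hexp]
  -- the product
  have termfact : ∀ j ∈ (Finset.range (c.length + 1)).erase i,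
      ((beta c.reverse j : ℝ) - (beta c.reverse i : ℝ))⁻¹
      = -(((beta c (c.length - j) : ℝ) - (beta c (c.length - i) : ℝ))⁻¹) := by
    intro j hj
    have hj' : j ≤ c.length := by
      have := Finset.mem_range.mp (Finset.mem_of_mem_erase hj); omega
    rw [beta_reverse c hj', hbr]
    have : ((c.sum - beta c (c.length - j) : ℕ) : ℝ) - ((c.sum - beta c (c.length - i) : ℕ) : ℝ)
        = -((beta c (c.length - j) : ℝ) - (beta c (c.length - i) : ℝ)) := by
      rw [Nat.cast_sub (beta_le_sum _ _), Nat.cast_sub (beta_le_sum _ _)]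
      ring
    rw [this, inv_neg]
  rw [Finset.prod_congr rfl termfact, prod_neg',
    Finset.card_erase_of_mem (Finset.mem_range.mpr (by omega)), Finset.card_range]
  have himg : ((Finset.range (c.length + 1)).erase i).image (fun j => c.length - j)
      = (Finset.range (c.length + 1)).erase (c.length - i) := by
    ext x
    simp only [Finset.mem_image, Finset.mem_erase, Finset.mem_range]
    constructor
    · rintro ⟨j, ⟨hj1, hj2⟩, rfl⟩
      omega
    · rintro ⟨hx1, hx2⟩
      exact ⟨c.length - x, ⟨by omega, by omega⟩, by omega⟩
  have hreindex : ∏ j ∈ (Finset.range (c.length + 1)).erase i,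
      ((beta c (c.length - j) : ℝ) - (beta c (c.length - i) : ℝ))⁻¹
      = ∏ j ∈ (Finset.range (c.length + 1)).erase (c.length - i),
          ((beta c j : ℝ) - (beta c (c.length - i) : ℝ))⁻¹ := by
    rw [← himg, Finset.prod_image]
    intro x hx y hy hxy
    have hx' := Finset.mem_range.mp (Finset.mem_of_mem_erase hx)
    have hy' := Finset.mem_range.mp (Finset.mem_of_mem_erase hy)
    simp only at hxy
    omega
  rw [hreindex, Nat.add_sub_cancel]
  have hsq : (-1 : ℝ) ^ c.length * (-1 : ℝ) ^ c.length = 1 := by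
    rw [← mul_pow]; norm_num
  rw [show ∀ x p : ℝ, x * ((-1 : ℝ) ^ c.length * ((-1 : ℝ) ^ c.length * p))
      = x * (((-1 : ℝ) ^ c.length * (-1 : ℝ) ^ c.length) * p) from fun x p => by ring,
    hsq, one_mul]

def skip (m i : ℕ) : ℕ := if i < m then i else i + 1

lemma skip_inj (m : ℕ) : Function.Injective (skip m) := by
  intro x y h
  unfold skip at h
  split_ifs at h <;> omega

lemma image_skip (m L : ℕ) (hm : m ≤ L) :
    (Finset.range L).image (skip m) = (Finset.range (L + 1)).erase m := by
  ext x
  simp only [Finset.mem_image, Finset.mem_erase, Finset.mem_range]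
  constructor
  · rintro ⟨i, hi, rfl⟩
    unfold skip
    split_ifs <;> omega
  · rintro ⟨hx1, hx2⟩
    by_cases h : x < m
    · exact ⟨x, by omega, if_pos h⟩
    · exact ⟨x - 1, by omega, by unfold skip; rw [if_neg (by omega)]; omega⟩

lemma sum_transfer (L m : ℕ) (hm : m ≤ L) (F : ℕ → ℝ) :
    ∑ i ∈ Finset.range L, F (skip m i) = ∑ i ∈ (Finset.range (L + 1)).erase m, F i := by
  rw [← image_skip m L hm, Finset.sum_image (fun a _ b _ h => skip_inj m h)]

lemma prod_transfer (L m i : ℕ) (hm : m ≤ L) (F : ℕ → ℝ) :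
    ∏ j ∈ (Finset.range L).erase i, F (skip m j)
      = ∏ j ∈ ((Finset.range (L + 1)).erase m).erase (skip m i), F j := by
  rw [← image_skip m L hm, ← Finset.image_erase (skip_inj m),
    Finset.prod_image (fun a _ b _ h => skip_inj m h)]

theorem key (c : List ℕ) (hpos : ∀ a ∈ c, 0 < a) {m : ℕ} (hm : m ≤ c.length) (q : ℝ) :
    ∑ i ∈ Finset.range (c.length + 1),
        q ^ beta c i * ((beta c m : ℝ) - (beta c i : ℝ)) / vprod c i
    = ∑ i ∈ (Finset.range (c.length + 1)).erase m,
        q ^ beta c i * ∏ j ∈ ((Finset.range (c.length + 1)).erase m).erase i,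
          ((beta c j : ℝ) - (beta c i : ℝ))⁻¹ := by
  have hmem : m ∈ Finset.range (c.length + 1) := Finset.mem_range.mpr (by omega)
  rw [← Finset.sum_erase_add _ _ hmem]
  rw [sub_self, mul_zero, zero_div, add_zero]
  refine Finset.sum_congr rfl fun i hi => ?_
  have him : i ≠ m := (Finset.mem_erase.mp hi).1
  have hir : i < c.length + 1 := Finset.mem_range.mp (Finset.mem_erase.mp hi).2
  have hmm : m ∈ (Finset.range (c.length + 1)).erase i :=
    Finset.mem_erase.mpr ⟨him.symm, hmem⟩
  have hv : vprod c i = ((beta c m : ℝ) - (beta c i : ℝ)) *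
      ∏ j ∈ ((Finset.range (c.length + 1)).erase i).erase m,
        ((beta c j : ℝ) - (beta c i : ℝ)) := (Finset.mul_prod_erase _ _ hmm).symm
  have hd : ((beta c m : ℝ) - (beta c i : ℝ)) ≠ 0 := by
    have : beta c m ≠ beta c i := fun h => him.symm (beta_inj c hpos hm (by omega) h)
    intro h
    exact this (by exact_mod_cast sub_eq_zero.mp h)
  rw [hv, mul_div_assoc, div_mul_eq_div_div, div_self hd, one_div,
    Finset.prod_inv_distrib, Finset.erase_right_comm]

lemma beta_dropLast (c : List ℕ) {i : ℕ} (h : i ≤ c.length - 1) :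
    beta c.dropLast i = beta c i := by
  unfold beta
  rw [List.dropLast_eq_take, List.take_take, min_eq_left h]

lemma beta_one (c : List ℕ) (hc : c ≠ []) : beta c 1 = c.headI := by
  cases c with
  | nil => exact absurd rfl hc
  | cons h t => rw [show (1:ℕ) = 0 + 1 from rfl, beta_cons_succ, beta_zero]; rfl

lemma beta_tail (c : List ℕ) (hc : c ≠ []) (i : ℕ) :
    beta c.tail i = beta c (i + 1) - c.headI := by
  cases c with
  | nil => exact absurd rfl hc
  | cons h t => rw [List.tail_cons, beta_cons_succ]; simp [List.headI]

lemma beta_append (u w : List ℕ) (j : ℕ) :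
    beta (u ++ w) (u.length + j) = u.sum + beta w j := by
  unfold beta
  rw [List.take_append, List.sum_append, List.take_of_length_le (Nat.le_add_right _ _),
    Nat.add_sub_cancel_left]

lemma beta_merge (u : List ℕ) (a b : ℕ) (v : List ℕ) (i : ℕ) :
    beta (u ++ (a + b) :: v) i = beta (u ++ a :: b :: v) (skip (u.length + 1) i) := by
  unfold skip
  by_cases h : i < u.length + 1
  · rw [if_pos h]
    unfold beta
    rw [List.take_append_of_le_length (by omega), List.take_append_of_le_length (by omega)]
  · rw [if_neg h]
    obtain ⟨j, rfl⟩ : ∃ j, i = u.length + (j + 1) := ⟨i - u.length - 1, by omega⟩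
    rw [beta_append, show u.length + (j + 1) + 1 = u.length + (j + 1 + 1) from by omega,
      beta_append, beta_cons_succ, beta_cons_succ, beta_cons_succ]
    omega

lemma sum_transfer' (L m : ℕ) (hm : m ≤ L) (F G : ℕ → ℝ)
    (hFG : ∀ i < L, G i = F (skip m i)) :
    ∑ i ∈ Finset.range L, G i = ∑ i ∈ (Finset.range (L + 1)).erase m, F i := by
  rw [Finset.sum_congr rfl (fun i hi => hFG i (Finset.mem_range.mp hi)), ← image_skip m L hm,
    Finset.sum_image (fun a _ b _ h => skip_inj m h)]

lemma prod_transfer' (L m i : ℕ) (hm : m ≤ L) (F G : ℕ → ℝ)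
    (hFG : ∀ j ∈ (Finset.range L).erase i, G j = F (skip m j)) :
    ∏ j ∈ (Finset.range L).erase i, G j
      = ∏ j ∈ ((Finset.range (L + 1)).erase m).erase (skip m i), F j := by
  rw [Finset.prod_congr rfl hFG, ← image_skip m L hm, ← Finset.image_erase (skip_inj m),
    Finset.prod_image (fun a _ b _ h => skip_inj m h)]

end Aux

/-- Theorem: closed formulas for the composition polynomials of the merged
composition `c^m` (for `1 ≤ m ≤ k−1`, encoded by writing `c = u ++ a :: b :: v`
with `m = |u| + 1`, so that `c^m = u ++ (a+b) :: v`), and of the truncations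
`c^R = (c_1, …, c_{k−1})` and `c^L = (c_2, …, c_k)`. -/
theorem merged_truncated_closed_forms (c : List ℕ) (hpos : ∀ a ∈ c, 0 < a)
    (hk : 2 ≤ c.length) :
    (∀ (u : List ℕ) (a b : ℕ) (v : List ℕ), c = u ++ a :: b :: v →
      ∀ q : ℝ, gcomp (u ++ (a + b) :: v) q =
        ∑ i ∈ Finset.range (c.length + 1),
          q ^ beta c i * ((beta c (u.length + 1) : ℝ) - (beta c i : ℝ)) / vprod c i) ∧
    (∀ q : ℝ, gcomp c.dropLast q =
        ∑ i ∈ Finset.range (c.length + 1),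
          q ^ beta c i * ((c.sum : ℝ) - (beta c i : ℝ)) / vprod c i) ∧
    (∀ q : ℝ, q ^ c.headI * gcomp c.tail q =
        -∑ i ∈ Finset.range (c.length + 1),
          q ^ beta c i * (beta c i : ℝ) / vprod c i) := by
  refine ⟨?_, ?_, ?_⟩
  · -- merged composition
    rintro u a b v rfl q
    have hpos' : ∀ x ∈ u ++ (a + b) :: v, 0 < x := by
      intro x hx
      have ha : 0 < a := hpos a (by simp)
      rcases List.mem_append.mp hx with h | h
      · exact hpos x (by simp [h])
      · rcases List.mem_cons.mp h with rfl | h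
        · omega
        · exact hpos x (by simp [h])
    have hmlen : u.length + 1 ≤ (u ++ a :: b :: v).length := by
      simp only [List.length_append, List.length_cons]; omega
    rw [gcomp_eq _ hpos' q]
    have hL1 : (u ++ (a + b) :: v).length + 1 = (u ++ a :: b :: v).length := by
      simp only [List.length_append, List.length_cons]; omega
    rw [hL1, key (u ++ a :: b :: v) hpos hmlen q]
    refine sum_transfer' (u ++ a :: b :: v).length (u.length + 1) hmlen _ _ ?_
    intro i hi
    simp only [beta_merge u a b v]
    congr 1
    exact prod_transfer' _ (u.length + 1) i hmlen _ _ (fun j _ => rfl)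
  · -- right truncation
    intro q
    have hpos' : ∀ x ∈ c.dropLast, 0 < x := fun x hx =>
      hpos x ((List.dropLast_sublist c).subset hx)
    rw [gcomp_eq c.dropLast hpos' q]
    have hL2 : c.dropLast.length + 1 = c.length := by rw [List.length_dropLast]; omega
    rw [hL2, show ((c.sum : ℕ) : ℝ) = ((beta c c.length : ℕ) : ℝ) from by rw [beta_length],
      key c hpos (le_refl c.length) q,
      show (Finset.range (c.length + 1)).erase c.length = Finset.range c.length from by
        rw [Finset.range_add_one, Finset.erase_insert Finset.notMem_range_self]]
    refine Finset.sum_congr rfl fun i hi => ?_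
    have hi' : i < c.length := Finset.mem_range.mp hi
    rw [beta_dropLast c (by omega)]
    congr 1
    refine Finset.prod_congr rfl fun j hj => ?_
    have hj' : j < c.length := Finset.mem_range.mp (Finset.mem_of_mem_erase hj)
    rw [beta_dropLast c (by omega)]
  · -- left truncation
    intro q
    have hne : c ≠ [] := by intro h; rw [h] at hk; simp at hk
    have hpos' : ∀ x ∈ c.tail, 0 < x := fun x hx => hpos x (List.mem_of_mem_tail hx)
    have hsk0 : ∀ i : ℕ, skip 0 i = i + 1 := fun i => by unfold skip; rw [if_neg (by omega)]
    have hble : ∀ j : ℕ, c.headI ≤ beta c (j + 1) := fun j => by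
      rw [← beta_one c hne]; exact beta_mono c (by omega)
    have hcast : ∀ j : ℕ, ((beta c.tail j : ℕ) : ℝ) = (beta c (j + 1) : ℝ) - (c.headI : ℝ) := by
      intro j
      rw [beta_tail c hne j, Nat.cast_sub (hble j)]
    have hrhs : -∑ i ∈ Finset.range (c.length + 1),
          q ^ beta c i * (beta c i : ℝ) / vprod c i
        = ∑ i ∈ Finset.range (c.length + 1),
            q ^ beta c i * ((beta c 0 : ℝ) - (beta c i : ℝ)) / vprod c i := by
      rw [← Finset.sum_neg_distrib]
      refine Finset.sum_congr rfl fun i _ => ?_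
      rw [beta_zero]
      push_cast
      ring
    rw [hrhs, key c hpos (Nat.zero_le c.length) q, gcomp_eq c.tail hpos' q]
    have hL3 : c.tail.length + 1 = c.length := by rw [List.length_tail]; omega
    rw [hL3, Finset.mul_sum]
    refine sum_transfer' c.length 0 (Nat.zero_le _) _ _ ?_
    intro i hi
    simp only [hsk0]
    have hexp : c.headI + beta c.tail i = beta c (i + 1) := by
      rw [beta_tail c hne i]
      have := hble i
      omega
    have hp : ∏ j ∈ (Finset.range c.length).erase i,
          ((beta c.tail j : ℝ) - (beta c.tail i : ℝ))⁻¹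
        = ∏ j ∈ ((Finset.range (c.length + 1)).erase 0).erase (i + 1),
            ((beta c j : ℝ) - (beta c (i + 1) : ℝ))⁻¹ := by
      have hp0 := prod_transfer' c.length 0 i (Nat.zero_le _)
        (fun j => ((beta c j : ℝ) - (beta c (i + 1) : ℝ))⁻¹)
        (fun j => ((beta c.tail j : ℝ) - (beta c.tail i : ℝ))⁻¹)
        (fun j _ => by
          simp only [hsk0]
          rw [hcast j, hcast i]
          congr 1
          ring)
      rw [hsk0 i] at hp0
      exact hp0
    rw [← mul_assoc, ← pow_add, hexp, hp]
end
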